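/- Let ℓ > 0 and let K(Σ) = √(Σ² + ℓ²) − ℓ·log(√(Σ² + ℓ²) + ℓ) + ℓ·log Σ for Σ > 0. Then for every Σ > 0, K′(Σ)·(K′(Σ) + Σ·K″(Σ)) = 1. -/

import Mathlib

lemma eh_hasDerivAt (ℓ : ℝ) (hℓ : 0 < ℓ) (K : ℝ → ℝ)
    (hK : ∀ S : ℝ, K S =
      Real.sqrt (S ^ 2 + ℓ ^ 2) - ℓ * Real.log (Real.sqrt (S ^ 2 + ℓ ^ 2) + ℓ)
        + ℓ * Real.log S) (S : ℝ) (hS : 0 < S) :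
    HasDerivAt K (Real.sqrt (S ^ 2 + ℓ ^ 2) / S) S := by
  have hpos : (0:ℝ) < S ^ 2 + ℓ ^ 2 := by positivity
  set r := Real.sqrt (S ^ 2 + ℓ ^ 2) with hrdef
  have hr : 0 < r := Real.sqrt_pos.2 hpos
  have hr2 : r ^ 2 = S ^ 2 + ℓ ^ 2 := Real.sq_sqrt hpos.le
  have h1 : HasDerivAt (fun x : ℝ => x ^ 2 + ℓ ^ 2) (2 * S) S := by
    simpa using (hasDerivAt_pow 2 S).add_const (ℓ ^ 2)
  have hsq : HasDerivAt (fun x : ℝ => Real.sqrt (x ^ 2 + ℓ ^ 2)) (S / r) S := by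
    have := (Real.hasDerivAt_sqrt hpos.ne').comp S h1
    convert this using 1
    · rfl
    · rfl
    · rfl
    rw [← hrdef]
    field_simp
  have hlog : HasDerivAt (fun x : ℝ => Real.log (Real.sqrt (x ^ 2 + ℓ ^ 2) + ℓ))
      ((S / r) / (r + ℓ)) S := by
    have hne : r + ℓ ≠ 0 := by positivity
    have := (Real.hasDerivAt_log hne).comp S (hsq.add_const ℓ)
    convert this using 1
    · rfl
    · rfl
    · rfl
    field_simp
  have hlogS : HasDerivAt Real.log (1 / S) S := by
    simpa using Real.hasDerivAt_log hS.ne'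
  have hKfun : K = fun x : ℝ => Real.sqrt (x ^ 2 + ℓ ^ 2)
      - ℓ * Real.log (Real.sqrt (x ^ 2 + ℓ ^ 2) + ℓ) + ℓ * Real.log x := funext hK
  have htot : HasDerivAt K (S / r - ℓ * ((S / r) / (r + ℓ)) + ℓ * (1 / S)) S := by
    rw [hKfun]
    exact ((hsq.sub (hlog.const_mul ℓ)).add (hlogS.const_mul ℓ))
  convert htot using 1
  have hne : r + ℓ ≠ 0 := by positivity
  field_simp
  linear_combination r * hr2

theorem stmt_1 (ℓ : ℝ) (hℓ : 0 < ℓ) (K : ℝ → ℝ)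
    (hK : ∀ S : ℝ, K S =
      Real.sqrt (S ^ 2 + ℓ ^ 2) - ℓ * Real.log (Real.sqrt (S ^ 2 + ℓ ^ 2) + ℓ)
        + ℓ * Real.log S) :
    ∀ S : ℝ, 0 < S →
      deriv K S * (deriv K S + S * deriv (deriv K) S) = 1 := by
  intro S hS
  have hderivK : ∀ x : ℝ, 0 < x → deriv K x = Real.sqrt (x ^ 2 + ℓ ^ 2) / x :=
    fun x hx => (eh_hasDerivAt ℓ hℓ K hK x hx).deriv
  have hpos : (0:ℝ) < S ^ 2 + ℓ ^ 2 := by positivity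
  set r := Real.sqrt (S ^ 2 + ℓ ^ 2) with hrdef
  have hr : 0 < r := Real.sqrt_pos.2 hpos
  have hr2 : r ^ 2 = S ^ 2 + ℓ ^ 2 := Real.sq_sqrt hpos.le
  have h1 : HasDerivAt (fun x : ℝ => x ^ 2 + ℓ ^ 2) (2 * S) S := by
    simpa using (hasDerivAt_pow 2 S).add_const (ℓ ^ 2)
  have hsq : HasDerivAt (fun x : ℝ => Real.sqrt (x ^ 2 + ℓ ^ 2)) (S / r) S := by
    have := (Real.hasDerivAt_sqrt hpos.ne').comp S h1
    convert this using 1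
    · rfl
    · rfl
    · rfl
    rw [← hrdef]
    field_simp
  have hg : HasDerivAt (fun x : ℝ => Real.sqrt (x ^ 2 + ℓ ^ 2) / x)
      ((S / r * S - r * 1) / S ^ 2) S := hsq.div (hasDerivAt_id S) hS.ne'
  have heq : deriv K =ᶠ[nhds S] fun x : ℝ => Real.sqrt (x ^ 2 + ℓ ^ 2) / x := by
    filter_upwards [isOpen_Ioi.mem_nhds hS] with x hx
    exact hderivK x hx
  have hderiv2 : deriv (deriv K) S = (S / r * S - r * 1) / S ^ 2 := by
    rw [heq.deriv_eq, hg.deriv]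
  rw [hderivK S hS, hderiv2, ← hrdef]
  field_simp
  ring
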